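/- Let D be a finite set of points in the Euclidean plane ℝ², let p ∈ ℝ², ε > 0, and let minpts be a natural number. Let 𝒞 be a finite family of pairwise disjoint subsets of ℝ² whose union contains the circumscribed square Q = {x : ‖x − p‖_∞ ≤ ε}. If the selectivity estimate Σ_{C ∈ 𝒞, C ∩ Q ≠ ∅} |D ∩ C| is strictly less than minpts, then |N_ε(p)| < minpts, i.e., the ε-neighborhood of p is guaranteed to be sparse and the expensive range query on the index can be avoided. -/
import Mathlib


open Classical

lemma ncard_biUnion_le' {α ι : Type*} (s : Finset ι) (f : ι → Set α) :
    (⋃ i ∈ s, f i).ncard ≤ ∑ i ∈ s, (f i).ncard := by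
  classical
  induction s using Finset.induction_on with
  | empty => simp
  | @insert a s hx ih =>
      rw [Finset.set_biUnion_insert, Finset.sum_insert hx]
      exact le_trans (Set.ncard_union_le _ _) (by omega)

/-- If the SGPL selectivity estimate (sum of cell counts over the cells
meeting the circumscribed square) is strictly below `minpts`, then the
ε-neighborhood of `p` within `D` is guaranteed to be sparse. -/
theorem sgpl_prunes_sparse_neighborhood
    (D : Set (EuclideanSpace ℝ (Fin 2))) (hD : D.Finite)
    (p : EuclideanSpace ℝ (Fin 2)) (ε : ℝ) (hε : 0 < ε) (minpts : ℕ)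
    (m : ℕ) (C : Fin m → Set (EuclideanSpace ℝ (Fin 2)))
    (hdisj : Pairwise (Function.onFun Disjoint C))
    (hcov : {x : EuclideanSpace ℝ (Fin 2) | |x 0 - p 0| ≤ ε ∧ |x 1 - p 1| ≤ ε}
      ⊆ ⋃ j, C j)
    (hest : ∑ j ∈ Finset.univ.filter (fun j : Fin m =>
          (C j ∩ {x : EuclideanSpace ℝ (Fin 2) |
            |x 0 - p 0| ≤ ε ∧ |x 1 - p 1| ≤ ε}).Nonempty),
        (D ∩ C j).ncard < minpts) :
    {x ∈ D | dist p x ≤ ε}.ncard < minpts := by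
  set Q : Set (EuclideanSpace ℝ (Fin 2)) :=
    {x | |x 0 - p 0| ≤ ε ∧ |x 1 - p 1| ≤ ε} with hQ
  set S := Finset.univ.filter (fun j : Fin m => (C j ∩ Q).Nonempty) with hS
  -- every point of the ε-ball lies in Q
  have hball : ∀ x, dist p x ≤ ε → x ∈ Q := by
    intro x hx
    have hcoord : ∀ i : Fin 2, |x i - p i| ≤ ε := by
      intro i
      have h1 : dist x p = Real.sqrt (∑ i, dist (x i) (p i) ^ 2) :=
        EuclideanSpace.dist_eq x p
      have h2 : dist (x i) (p i) ^ 2 ≤ ∑ j, dist (x j) (p j) ^ 2 :=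
        Finset.single_le_sum (f := fun j => dist (x j) (p j) ^ 2)
          (fun j _ => sq_nonneg _) (Finset.mem_univ i)
      have h3 : dist (x i) (p i) ≤ dist x p := by
        rw [h1]
        have := Real.sqrt_le_sqrt h2
        rwa [Real.sqrt_sq dist_nonneg] at this
      calc |x i - p i| = dist (x i) (p i) := (Real.dist_eq _ _).symm
        _ ≤ dist x p := h3
        _ = dist p x := dist_comm x p
        _ ≤ ε := hx
    exact ⟨hcoord 0, hcoord 1⟩
  have hsub : {x ∈ D | dist p x ≤ ε} ⊆ ⋃ j ∈ S, (D ∩ C j) := by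
    intro x ⟨hxD, hxd⟩
    have hxQ : x ∈ Q := hball x hxd
    obtain ⟨j, hj⟩ := Set.mem_iUnion.mp (hcov hxQ)
    exact Set.mem_biUnion
      (Finset.mem_filter.mpr ⟨Finset.mem_univ j, ⟨x, hj, hxQ⟩⟩) ⟨hxD, hj⟩
  calc {x ∈ D | dist p x ≤ ε}.ncard
      ≤ (⋃ j ∈ S, (D ∩ C j)).ncard := by
        exact Set.ncard_le_ncard hsub
          (hD.subset (Set.iUnion₂_subset fun j _ => Set.inter_subset_left))
    _ ≤ ∑ j ∈ S, (D ∩ C j).ncard := ncard_biUnion_le' S _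
    _ < minpts := hest
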